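/- arXiv:1310.3514 — 2 statements merged into one kernel-verified Lean document; each statement's English description precedes it below -/
import Mathlib

section
/- Let λ < 0 and h > 0. For b⁻ ≤ b⁺ reals and a differentiable function a with λ(a - b⁻) ≤ a' ≤ λ(a - b⁺) componentwise interval sense, define g^± = (a(0)^± - b^±)e^{λh} + b^±. Then a(h) ∈ [g⁻, g⁺] and moreover [a(0)⁻, a(0)⁺] ∪ [g⁻, g⁺] contains a(t) for all t ∈ [0, h] (monotonicity of bounds: the trajectory over [0,h] is contained in the union of the initial interval and the linear-approximation interval). -/
open Set Real

lemma aux_lower (l h c : ℝ) (a a' : ℝ → ℝ)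
    (hderiv : ∀ t ∈ Set.Icc (0 : ℝ) h, HasDerivAt a (a' t) t)
    (hge : ∀ t ∈ Set.Icc (0 : ℝ) h, l * (a t - c) ≤ a' t) :
    ∀ t ∈ Set.Icc (0 : ℝ) h, (a 0 - c) * Real.exp (l * t) ≤ a t - c := by
  intro t ht
  rcases ht with ⟨ht0, hth⟩
  set f : ℝ → ℝ := fun t => (a t - c) * Real.exp (-(l * t)) with hf
  have hfd : ∀ x ∈ Set.Icc (0 : ℝ) h,
      HasDerivAt f ((a' x - l * (a x - c)) * Real.exp (-(l * x))) x := by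
    intro x hx
    have h1 : HasDerivAt (fun t => a t - c) (a' x) x := (hderiv x hx).sub_const c
    have h2 : HasDerivAt (fun t : ℝ => Real.exp (-(l * t))) (-l * Real.exp (-(l * x))) x := by
      have : HasDerivAt (fun t : ℝ => -(l * t)) (-l) x := by
        simpa [Pi.neg_def] using ((hasDerivAt_id x).const_mul l).neg
      simpa [mul_comm] using this.exp
    have := h1.mul h2
    exact this.congr_deriv (by ring)
  have hmono : MonotoneOn f (Set.Icc 0 h) := by
    apply monotoneOn_of_deriv_nonneg (convex_Icc 0 h)
    · exact fun x hx => ((hfd x hx).continuousAt).continuousWithinAt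
    · intro x hx
      rw [interior_Icc] at hx
      exact ((hfd x (Set.mem_Icc_of_Ioo hx)).differentiableAt).differentiableWithinAt
    · intro x hx
      rw [interior_Icc] at hx
      rw [((hfd x (Set.mem_Icc_of_Ioo hx)).deriv)]
      have := hge x (Set.mem_Icc_of_Ioo hx)
      have hexp := Real.exp_pos (-(l * x))
      nlinarith
  have h0 : f 0 ≤ f t := hmono (Set.left_mem_Icc.2 (ht0.trans hth)) ⟨ht0, hth⟩ ht0
  have hf0 : f 0 = a 0 - c := by simp [hf]
  have hft : f t = (a t - c) * Real.exp (-(l * t)) := rfl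
  rw [hf0, hft] at h0
  have hexp : (0:ℝ) < Real.exp (l * t) := Real.exp_pos _
  have := mul_le_mul_of_nonneg_right h0 hexp.le
  rwa [mul_assoc, ← Real.exp_add, neg_add_cancel, Real.exp_zero, mul_one] at this

lemma aux_upper (l h c : ℝ) (a a' : ℝ → ℝ)
    (hderiv : ∀ t ∈ Set.Icc (0 : ℝ) h, HasDerivAt a (a' t) t)
    (hle : ∀ t ∈ Set.Icc (0 : ℝ) h, a' t ≤ l * (a t - c)) :
    ∀ t ∈ Set.Icc (0 : ℝ) h, a t - c ≤ (a 0 - c) * Real.exp (l * t) := by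
  intro t ht
  have := aux_lower l h (-c) (fun t => -a t) (fun t => -a' t)
    (fun t ht => (hderiv t ht).neg)
    (fun t ht => by have := hle t ht; nlinarith)
    t ht
  nlinarith [this]

theorem stmt_15 (l h bm bp a0m a0p : ℝ) (hl : l < 0) (hh : 0 < h) (hb : bm ≤ bp)
    (ha0 : a0m ≤ a0p)
    (a a' : ℝ → ℝ) (hderiv : ∀ t ∈ Set.Icc (0 : ℝ) h, HasDerivAt a (a' t) t)
    (hlb : ∀ t ∈ Set.Icc (0 : ℝ) h, l * (a t - bm) ≤ a' t)
    (hub : ∀ t ∈ Set.Icc (0 : ℝ) h, a' t ≤ l * (a t - bp))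
    (hinit : a 0 ∈ Set.Icc a0m a0p) :
    a h ∈ Set.Icc ((a0m - bm) * Real.exp (l * h) + bm)
                  ((a0p - bp) * Real.exp (l * h) + bp) ∧
    ∀ t ∈ Set.Icc (0 : ℝ) h,
      a t ∈ Set.Icc (min a0m ((a0m - bm) * Real.exp (l * h) + bm))
                    (max a0p ((a0p - bp) * Real.exp (l * h) + bp)) := by
  obtain ⟨hi0, hi1⟩ := hinit
  have hlow := aux_lower l h bm a a' hderiv hlb
  have hup := aux_upper l h bp a a' hderiv hub
  have key : ∀ t ∈ Set.Icc (0 : ℝ) h,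
      (a0m - bm) * Real.exp (l * t) + bm ≤ a t ∧
      a t ≤ (a0p - bp) * Real.exp (l * t) + bp := by
    intro t ht
    have h1 := hlow t ht
    have h2 := hup t ht
    have he : (0:ℝ) < Real.exp (l * t) := Real.exp_pos _
    constructor
    · nlinarith
    · nlinarith
  constructor
  · have := key h ⟨hh.le, le_refl h⟩
    exact ⟨this.1, this.2⟩
  · intro t ht
    obtain ⟨k1, k2⟩ := key t ht
    have heh : Real.exp (l * h) ≤ Real.exp (l * t) := by
      apply Real.exp_le_exp.2
      nlinarith [ht.2]
    have he1 : Real.exp (l * t) ≤ 1 := by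
      rw [← Real.exp_zero]
      apply Real.exp_le_exp.2
      nlinarith [ht.1]
    constructor
    · rcases le_total a0m bm with hc | hc
      · have : a0m ≤ (a0m - bm) * Real.exp (l * t) + bm := by nlinarith
        exact le_trans (min_le_left _ _) (le_trans this k1)
      · have : (a0m - bm) * Real.exp (l * h) + bm ≤ (a0m - bm) * Real.exp (l * t) + bm := by
          nlinarith
        exact le_trans (min_le_right _ _) (le_trans this k1)
    · rcases le_total bp a0p with hc | hc
      · have : (a0p - bp) * Real.exp (l * t) + bp ≤ a0p := by nlinarith
        exact le_trans (le_trans k2 this) (le_max_left _ _)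
      · have : (a0p - bp) * Real.exp (l * t) + bp ≤ (a0p - bp) * Real.exp (l * h) + bp := by
          nlinarith
        exact le_trans (le_trans k2 this) (le_max_right _ _)
end

section
/- Let Ẽ > 0, α ∈ ℝ, and suppose |a_k| ≤ C₂/|k| for |k| > M and Σ_{k≠0}|a_k|² ≤ Ẽ, a_0 = α. With D₂ = 2^{1/2} + (1/√1)·2⁰ [i.e., D corresponding to s = 1], the nonlinearity satisfies |N_k({a_k})| ≤ C₂√(Ẽ+α²)D₂·|k|^{1/2} for all k ≠ 0; consequently b_k = (N_k+f_k)/(νk²) satisfies |b_k| ≤ C₃/|k|^{3/2} with C₃ = (C₂√(Ẽ+α²)D₂ + max_{0<|k|≤J}|f_k|/|k|^{1/2})/ν. -/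
open Finset

lemma aux_teles (m : ℕ) : ∀ N : ℕ, m ≤ N →
    ∑ n ∈ Finset.Ioc m N, (1:ℝ)/(n:ℝ)^2 ≤ 1/((m:ℝ)+1/2) - 1/((N:ℝ)+1/2) := by
  intro N
  induction N with
  | zero =>
    intro h
    have : m = 0 := Nat.le_zero.mp h
    subst this; simp
  | succ N ih =>
    intro hm
    rcases Nat.lt_or_ge m (N+1) with h | h
    · have hm' : m ≤ N := Nat.lt_succ_iff.mp h
      rw [Finset.sum_Ioc_succ_top hm']
      have h1 : (1:ℝ)/((N:ℝ)+1)^2 ≤ 1/((N:ℝ)+1/2) - 1/(((N:ℝ)+1)+1/2) := by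
        rw [div_sub_div _ _ (by positivity) (by positivity),
          div_le_div_iff₀ (by positivity) (by positivity)]
        nlinarith [sq_nonneg ((N:ℝ))]
      have h2 := ih hm'
      push_cast
      push_cast at h1 h2
      linarith
    · have : m = N + 1 := le_antisymm hm h
      subst this; simp

lemma aux_pos_tail (m : ℕ) (u : Finset ℤ) (hu : ∀ x ∈ u, (m:ℤ) < x) :
    ∑ x ∈ u, (1:ℝ)/(x:ℝ)^2 ≤ 1/((m:ℝ)+1/2) := by
  classical
  set v : Finset ℕ := u.image Int.toNat with hv
  have hsum_eq : ∑ x ∈ u, (1:ℝ)/(x:ℝ)^2 = ∑ n ∈ v, (1:ℝ)/(n:ℝ)^2 := by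
    rw [hv, Finset.sum_image]
    · apply Finset.sum_congr rfl
      intro x hx
      have : ((x.toNat : ℤ) : ℝ) = (x : ℝ) := by
        rw [Int.toNat_of_nonneg (le_of_lt (lt_of_le_of_lt (Int.natCast_nonneg m) (hu x hx)))]
      rw [← this]; push_cast; ring
    · intro x hx y hy hxy
      have hx' := hu x hx; have hy' := hu y hy
      omega
  rw [hsum_eq]
  rcases v.eq_empty_or_nonempty with he | hne
  · rw [he]; simp; positivity
  · set N : ℕ := v.sup id with hN
    have hsub : v ⊆ Finset.Ioc m N := by
      intro n hn
      rw [Finset.mem_Ioc]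
      constructor
      · obtain ⟨x, hx, rfl⟩ := Finset.mem_image.mp hn
        have := hu x hx; omega
      · exact Finset.le_sup (f := id) hn
    calc ∑ n ∈ v, (1:ℝ)/(n:ℝ)^2 ≤ ∑ n ∈ Finset.Ioc m N, (1:ℝ)/(n:ℝ)^2 :=
          Finset.sum_le_sum_of_subset_of_nonneg hsub (fun i _ _ => by positivity)
      _ ≤ 1/((m:ℝ)+1/2) - 1/((N:ℝ)+1/2) := by
          apply aux_teles
          obtain ⟨n, hn⟩ := hne
          have := Finset.mem_Ioc.mp (hsub hn)
          omega
      _ ≤ 1/((m:ℝ)+1/2) := by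
          have : 0 ≤ 1/((N:ℝ)+1/2) := by positivity
          linarith

lemma aux_tail (m : ℕ) (t : Finset ℤ) (ht : ∀ x ∈ t, (m:ℤ) < |x|) :
    ∑ x ∈ t, (1:ℝ)/(x:ℝ)^2 ≤ 2/((m:ℝ)+1/2) := by
  classical
  set tp := t.filter (fun x => 0 < x) with htp
  set tn := t.filter (fun x => x < 0) with htn
  have hsplit : t = tp ∪ tn := by
    ext x
    simp only [htp, htn, Finset.mem_union, Finset.mem_filter]
    constructor
    · intro hx
      have := ht x hx
      rcases lt_trichotomy x 0 with h | h | h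
      · exact Or.inr ⟨hx, h⟩
      · subst h; simp at this; omega
      · exact Or.inl ⟨hx, h⟩
    · rintro (⟨h, _⟩ | ⟨h, _⟩) <;> exact h
  have hdisj : Disjoint tp tn := by
    rw [Finset.disjoint_left]
    intro x hx hy
    simp only [htp, htn, Finset.mem_filter] at hx hy
    omega
  rw [hsplit, Finset.sum_union hdisj]
  have h1 : ∑ x ∈ tp, (1:ℝ)/(x:ℝ)^2 ≤ 1/((m:ℝ)+1/2) := by
    apply aux_pos_tail
    intro x hx
    simp only [htp, Finset.mem_filter] at hx
    have := ht x hx.1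
    rw [abs_of_pos hx.2] at this; exact this
  have h2 : ∑ x ∈ tn, (1:ℝ)/(x:ℝ)^2 ≤ 1/((m:ℝ)+1/2) := by
    have heq2 : ∑ x ∈ tn, (1:ℝ)/(x:ℝ)^2 = ∑ x ∈ tn.image (fun x => -x), (1:ℝ)/(x:ℝ)^2 := by
      rw [Finset.sum_image (by intro x _ y _ h; exact neg_inj.mp h)]
      apply Finset.sum_congr rfl
      intro x _; push_cast; ring
    rw [heq2]
    apply aux_pos_tail
    intro x hx
    obtain ⟨y, hy, rfl⟩ := Finset.mem_image.mp hx
    simp only [htn, Finset.mem_filter] at hy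
    have := ht y hy.1
    rw [abs_of_neg hy.2] at this; exact this
  have heq : (2:ℝ)/((m:ℝ)+1/2) = 1/((m:ℝ)+1/2) + 1/((m:ℝ)+1/2) := by ring
  rw [heq]; exact add_le_add h1 h2

set_option maxHeartbeats 1000000 in
theorem stmt_19 (ν α Etil C₂ : ℝ) (hν : 0 < ν) (hEt : 0 < Etil) (hC₂ : 0 < C₂)
    (J : ℤ) (hJ : 1 ≤ J)
    (f a : ℤ → ℂ) (hf0 : f 0 = 0) (hfJ : ∀ k : ℤ, J < |k| → f k = 0)
    (h0 : a 0 = (α : ℂ))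
    (hsum : Summable fun k : ℤ => ‖a k‖ ^ 2)
    (hE : ∑' k : {k : ℤ // k ≠ 0}, ‖a (k : ℤ)‖ ^ 2 ≤ Etil)
    (hbd : ∀ k : ℤ, k ≠ 0 → ‖a k‖ ≤ C₂ / |(k : ℝ)|) :
    ∀ k : ℤ, k ≠ 0 →
      ‖-Complex.I * ((k : ℂ) / 2) * ∑' k₁ : ℤ, a k₁ * a (k - k₁)‖ ≤
        C₂ * Real.sqrt (Etil + α ^ 2) * (Real.sqrt 2 + 1) * |(k : ℝ)| ^ ((1 : ℝ) / 2) ∧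
      ‖(-Complex.I * ((k : ℂ) / 2) * (∑' k₁ : ℤ, a k₁ * a (k - k₁)) + f k) /
          ((ν * (k : ℝ) ^ 2 : ℝ) : ℂ)‖ ≤
        ((C₂ * Real.sqrt (Etil + α ^ 2) * (Real.sqrt 2 + 1) +
            ⨆ j : {j : ℤ // j ≠ 0 ∧ |j| ≤ J}, ‖f (j : ℤ)‖ / Real.sqrt |((j : ℤ) : ℝ)|) / ν) /
          |(k : ℝ)| ^ ((3 : ℝ) / 2) := by
  classical
  intro k hk
  set E := Etil + α ^ 2 with hEdef
  have hEpos : 0 < E := by positivity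
  set K := |(k:ℝ)| with hKdef
  have hkR : (k:ℝ) ≠ 0 := Int.cast_ne_zero.mpr hk
  have hKpos : 0 < K := abs_pos.mpr hkR
  have hKnat : K = (k.natAbs : ℝ) := by
    rw [hKdef, Nat.cast_natAbs, Int.cast_abs]
  have hnat1 : 1 ≤ k.natAbs := Int.natAbs_pos.mpr hk
  have hK1 : 1 ≤ K := by rw [hKnat]; exact_mod_cast hnat1
  set m := k.natAbs / 2 with hmdef
  have hmod := Nat.div_add_mod k.natAbs 2
  have hm1 : 2*m ≤ k.natAbs := by omega
  have hm2 : k.natAbs ≤ 2*m+1 := by omega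
  set s : Finset ℤ := Finset.Icc (-(m:ℤ)) (m:ℤ) with hsdef
  -- summability
  have hshift : Summable fun j : ℤ => ‖a (k - j)‖^2 :=
    hsum.comp_injective (fun x y h => by omega)
  have habs : Summable fun j : ℤ => ‖a j‖ * ‖a (k - j)‖ := by
    apply Summable.of_nonneg_of_le (fun j => by positivity)
      (fun j => ?_) ((hsum.add hshift).div_const 2)
    nlinarith [sq_nonneg (‖a j‖ - ‖a (k - j)‖)]
  have hprod : Summable fun j : ℤ => a j * a (k - j) := by
    apply Summable.of_norm
    simpa only [norm_mul] using habs
  -- total energy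
  have hsub0 : Summable fun x : {k' : ℤ // k' ≠ 0} => ‖a (x:ℤ)‖^2 :=
    hsum.comp_injective Subtype.val_injective
  have htot : ∑' n : ℤ, ‖a n‖^2 ≤ E := by
    have hd := Summable.sum_add_tsum_subtype_compl hsum ({0} : Finset ℤ)
    have h00 : ∑ x ∈ ({0} : Finset ℤ), ‖a x‖^2 = α^2 := by
      simp [h0, Complex.norm_real, sq_abs]
    have he : ∑' x : {x : ℤ // x ∉ ({0}:Finset ℤ)}, ‖a (x:ℤ)‖^2
        = ∑' x : {k' : ℤ // k' ≠ 0}, ‖a (x:ℤ)‖^2 :=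
      Equiv.tsum_eq (Equiv.subtypeEquivRight (fun x => by simp))
        (fun x : {k' : ℤ // k' ≠ 0} => ‖a (x:ℤ)‖^2)
    rw [← hd, h00, he]
    linarith
  have hterm : ∀ j : ℤ, ‖a j‖ ≤ Real.sqrt E := by
    intro j
    have h2 : ‖a j‖^2 ≤ E := by
      by_cases hj : j = 0
      · subst hj; rw [h0, Complex.norm_real, Real.norm_eq_abs, sq_abs]; linarith
      · have hle : ‖a j‖^2 ≤ ∑' x : {k' : ℤ // k' ≠ 0}, ‖a (x:ℤ)‖^2 :=
          Summable.le_tsum hsub0 ⟨j, hj⟩ (fun b _ => by positivity)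
        linarith [hE, sq_nonneg α]
    calc ‖a j‖ = Real.sqrt (‖a j‖^2) := (Real.sqrt_sq (norm_nonneg _)).symm
      _ ≤ Real.sqrt E := Real.sqrt_le_sqrt h2
  -- part 1
  have hp1 : ∀ j ∈ s, ‖a (k - j)‖ ≤ 2*C₂/K := by
    intro j hj
    have hj' : |j| ≤ (m:ℤ) := abs_le.mpr (Finset.mem_Icc.mp hj)
    have habs1 : (k.natAbs:ℤ) - m ≤ |k - j| := by
      have h1 : |k| - |j| ≤ |k - j| := abs_sub_abs_le_abs_sub k j
      have h2 : |k| = (k.natAbs:ℤ) := Int.abs_eq_natAbs k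
      omega
    have hne : k - j ≠ 0 := by
      have h3 : 1 ≤ |k - j| := by omega
      intro h; rw [h] at h3; simp at h3
    have hb := hbd (k - j) hne
    push_cast at hb
    have hcast : K ≤ 2 * |(k:ℝ) - (j:ℝ)| := by
      have h2 : (k.natAbs:ℤ) ≤ 2 * |k - j| := by omega
      have h3 : ((k.natAbs:ℤ):ℝ) ≤ ((2*|k - j| : ℤ):ℝ) := Int.cast_le.mpr h2
      push_cast at h3
      rw [hKdef]
      exact h3
    have habspos : 0 < |(k:ℝ) - (j:ℝ)| := by linarith
    calc ‖a (k - j)‖ ≤ C₂ / |(k:ℝ) - (j:ℝ)| := hb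
      _ ≤ 2*C₂/K := by
        rw [div_le_div_iff₀ habspos hKpos]
        nlinarith [hC₂.le]
  have hcard : s.card = 2*m+1 := by
    rw [hsdef, Int.card_Icc]
    omega
  have hcardle : (s.card : ℝ) ≤ 2*K := by
    rw [hcard, hKnat]
    have : (2*m+1 : ℕ) ≤ 2*k.natAbs := by omega
    exact_mod_cast this
  have hsum_s_sq : ∑ j ∈ s, ‖a j‖^2 ≤ E :=
    le_trans (Summable.sum_le_tsum s (fun i _ => by positivity) hsum) htot
  have hCS1 : ∑ j ∈ s, ‖a j‖ ≤ Real.sqrt (2*K) * Real.sqrt E := by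
    have h1 : (∑ j ∈ s, ‖a j‖)^2 ≤ (s.card:ℝ) * ∑ j ∈ s, ‖a j‖^2 :=
      sq_sum_le_card_mul_sum_sq
    have hnn : 0 ≤ ∑ j ∈ s, ‖a j‖^2 := by positivity
    have h2 : (∑ j ∈ s, ‖a j‖)^2 ≤ (2*K) * E := by nlinarith
    calc ∑ j ∈ s, ‖a j‖ = Real.sqrt ((∑ j ∈ s, ‖a j‖)^2) :=
          (Real.sqrt_sq (by positivity)).symm
      _ ≤ Real.sqrt ((2*K)*E) := Real.sqrt_le_sqrt h2
      _ = Real.sqrt (2*K) * Real.sqrt E := Real.sqrt_mul (by positivity) E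
  have hKs : Real.sqrt K * Real.sqrt K = K := Real.mul_self_sqrt hKpos.le
  have hsqKpos : 0 < Real.sqrt K := Real.sqrt_pos.mpr hKpos
  have hpart1 : ∑ j ∈ s, ‖a j‖ * ‖a (k - j)‖
      ≤ 2*Real.sqrt 2*(C₂*Real.sqrt E)/Real.sqrt K := by
    have h1 : ∑ j ∈ s, ‖a j‖ * ‖a (k - j)‖ ≤ ∑ j ∈ s, ‖a j‖ * (2*C₂/K) :=
      Finset.sum_le_sum (fun j hj => mul_le_mul_of_nonneg_left (hp1 j hj) (norm_nonneg _))
    have h2 : ∑ j ∈ s, ‖a j‖ * (2*C₂/K) = (2*C₂/K) * ∑ j ∈ s, ‖a j‖ := by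
      rw [← Finset.sum_mul]; ring
    have h3 : (2*C₂/K) * ∑ j ∈ s, ‖a j‖ ≤ (2*C₂/K) * (Real.sqrt (2*K) * Real.sqrt E) :=
      mul_le_mul_of_nonneg_left hCS1 (by positivity)
    have h4 : (2*C₂/K) * (Real.sqrt (2*K) * Real.sqrt E)
        = 2*Real.sqrt 2*(C₂*Real.sqrt E)/Real.sqrt K := by
      rw [Real.sqrt_mul (by norm_num : (0:ℝ) ≤ 2) K]
      field_simp
      linear_combination hKs
    linarith
  -- part 2
  have hscomp : ∀ x : {x : ℤ // x ∉ s}, (m:ℤ) < |(x:ℤ)| := by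
    rintro ⟨xv, hxv⟩
    simp only [hsdef, Finset.mem_Icc, not_and, not_le] at hxv
    show (m:ℤ) < |xv|
    rw [lt_abs]
    by_cases hc : -(m:ℤ) ≤ xv
    · exact Or.inl (hxv hc)
    · push_neg at hc
      right
      omega
  have hsub2 : Summable (fun x : {x : ℤ // x ∉ s} => ‖a (x:ℤ)‖ * ‖a (k - (x:ℤ))‖) :=
    habs.comp_injective Subtype.val_injective
  have hpart2 : ∑' x : {x : ℤ // x ∉ s}, ‖a (x:ℤ)‖ * ‖a (k - (x:ℤ))‖
      ≤ 2*(C₂*Real.sqrt E)/Real.sqrt K := by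
    apply Summable.tsum_le_of_sum_le hsub2
    intro u
    have hCS := Finset.sum_mul_sq_le_sq_mul_sq u
      (fun x : {x:ℤ//x∉s} => ‖a (x:ℤ)‖) (fun x => ‖a (k - (x:ℤ))‖)
    have hfsq : ∑ x ∈ u, ‖a (x:ℤ)‖^2 ≤ C₂^2*(4/K) := by
      have h1 : ∀ x ∈ u, ‖a (x:ℤ)‖^2 ≤ C₂^2 * (1/((x:ℤ):ℝ)^2) := by
        intro x _
        have hxa := hscomp x
        have hx0 : (x:ℤ) ≠ 0 := by
          intro h; rw [h] at hxa; simp at hxa; omega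
        have hb := hbd (x:ℤ) hx0
        calc ‖a (x:ℤ)‖^2 ≤ (C₂/|((x:ℤ):ℝ)|)^2 :=
              pow_le_pow_left₀ (norm_nonneg _) hb 2
          _ = C₂^2 * (1/((x:ℤ):ℝ)^2) := by rw [div_pow, sq_abs]; ring
      have h2 : ∑ x ∈ u, ‖a (x:ℤ)‖^2 ≤ C₂^2 * ∑ x ∈ u, (1/((x:ℤ):ℝ)^2) := by
        rw [Finset.mul_sum]; exact Finset.sum_le_sum h1
      have h3 : ∑ x ∈ u, (1:ℝ)/((x:ℤ):ℝ)^2 = ∑ y ∈ u.image (Subtype.val), (1:ℝ)/(y:ℝ)^2 :=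
        (Finset.sum_image (f := fun y : ℤ => (1:ℝ)/(y:ℝ)^2)
          (fun x _ y _ h => Subtype.val_injective h)).symm
      have h4 : ∑ y ∈ u.image Subtype.val, (1:ℝ)/(y:ℝ)^2 ≤ 2/((m:ℝ)+1/2) := by
        apply aux_tail
        intro y hy
        obtain ⟨x, hx, rfl⟩ := Finset.mem_image.mp hy
        exact hscomp x
      have h5 : (2:ℝ)/((m:ℝ)+1/2) ≤ 4/K := by
        rw [div_le_div_iff₀ (by positivity) hKpos]
        have h6 : K ≤ 2*(m:ℝ)+1 := by
          rw [hKnat]; exact_mod_cast hm2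
        linarith
      have h7 : C₂^2 * ∑ x ∈ u, (1/((x:ℤ):ℝ)^2) ≤ C₂^2 * (4/K) := by
        apply mul_le_mul_of_nonneg_left _ (by positivity)
        rw [h3]; linarith
      linarith
    have hgsq : ∑ x ∈ u, ‖a (k - (x:ℤ))‖^2 ≤ E := by
      have hinj : ∀ x ∈ u, ∀ y ∈ u, k - (x:ℤ) = k - (y:ℤ) → x = y := by
        intro x _ y _ h
        have : (x:ℤ) = (y:ℤ) := by omega
        exact Subtype.val_injective this
      calc ∑ x ∈ u, ‖a (k - (x:ℤ))‖^2
          = ∑ y ∈ u.image (fun x : {x:ℤ//x∉s} => k - (x:ℤ)), ‖a y‖^2 :=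
            (Finset.sum_image (f := fun y : ℤ => ‖a y‖^2) hinj).symm
        _ ≤ E := le_trans (Summable.sum_le_tsum _ (fun i _ => by positivity) hsum) htot
    have hnn : 0 ≤ ∑ x ∈ u, ‖a (x:ℤ)‖ * ‖a (k - (x:ℤ))‖ := by positivity
    have h6 : (∑ x ∈ u, ‖a (x:ℤ)‖*‖a (k - (x:ℤ))‖)^2 ≤ (C₂^2*(4/K))*E := by
      have hnn2 : 0 ≤ ∑ x ∈ u, ‖a (k - (x:ℤ))‖^2 := by positivity
      exact le_trans hCS (mul_le_mul hfsq hgsq hnn2 (by positivity))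
    have h7 : ∑ x ∈ u, ‖a (x:ℤ)‖*‖a (k - (x:ℤ))‖ ≤ Real.sqrt ((C₂^2*(4/K))*E) := by
      calc ∑ x ∈ u, ‖a (x:ℤ)‖*‖a (k - (x:ℤ))‖
          = Real.sqrt ((∑ x ∈ u, ‖a (x:ℤ)‖*‖a (k - (x:ℤ))‖)^2) := (Real.sqrt_sq hnn).symm
        _ ≤ Real.sqrt ((C₂^2*(4/K))*E) := Real.sqrt_le_sqrt h6
    have h8 : Real.sqrt ((C₂^2*(4/K))*E) = 2*(C₂*Real.sqrt E)/Real.sqrt K := by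
      have heq : (C₂^2*(4/K))*E = (2*(C₂*Real.sqrt E)/Real.sqrt K)^2 := by
        rw [div_pow, mul_pow, mul_pow, Real.sq_sqrt hEpos.le, Real.sq_sqrt hKpos.le]
        field_simp
        ring
      rw [heq, Real.sqrt_sq (by positivity)]
    linarith
  -- assemble bound on S
  have hsplit := Summable.sum_add_tsum_subtype_compl habs s
  have hnorm_tsum : ‖∑' j : ℤ, a j * a (k - j)‖ ≤ ∑' j : ℤ, ‖a j‖*‖a (k-j)‖ := by
    have h := norm_tsum_le_tsum_norm (f := fun j : ℤ => a j * a (k - j))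
      (by simpa only [norm_mul] using habs)
    simpa only [norm_mul] using h
  have hSbound : ‖∑' j : ℤ, a j * a (k - j)‖
      ≤ 2*(Real.sqrt 2+1)*(C₂*Real.sqrt E)/Real.sqrt K := by
    have h1 : ∑' j : ℤ, ‖a j‖*‖a (k-j)‖
        ≤ 2*Real.sqrt 2*(C₂*Real.sqrt E)/Real.sqrt K + 2*(C₂*Real.sqrt E)/Real.sqrt K := by
      rw [← hsplit]
      exact add_le_add hpart1 hpart2
    calc ‖∑' j : ℤ, a j * a (k - j)‖ ≤ ∑' j : ℤ, ‖a j‖*‖a (k-j)‖ := hnorm_tsum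
      _ ≤ 2*Real.sqrt 2*(C₂*Real.sqrt E)/Real.sqrt K + 2*(C₂*Real.sqrt E)/Real.sqrt K := h1
      _ = 2*(Real.sqrt 2+1)*(C₂*Real.sqrt E)/Real.sqrt K := by ring
  have hrpow_half : K ^ ((1:ℝ)/2) = Real.sqrt K := (Real.sqrt_eq_rpow K).symm
  have hgoal1 : ‖-Complex.I * ((k : ℂ) / 2) * ∑' k₁ : ℤ, a k₁ * a (k - k₁)‖ ≤
      C₂ * Real.sqrt E * (Real.sqrt 2 + 1) * K ^ ((1 : ℝ) / 2) := by
    have hnormc : ‖-Complex.I * ((k:ℂ)/2)‖ = K/2 := by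
      rw [norm_mul, norm_neg, Complex.norm_I, one_mul, norm_div]
      norm_num [Complex.norm_intCast, hKdef]
    rw [norm_mul, hnormc]
    calc K/2 * ‖∑' k₁ : ℤ, a k₁ * a (k - k₁)‖
        ≤ K/2 * (2*(Real.sqrt 2+1)*(C₂*Real.sqrt E)/Real.sqrt K) :=
          mul_le_mul_of_nonneg_left hSbound (by positivity)
      _ = (Real.sqrt 2+1)*(C₂*Real.sqrt E)*(K/Real.sqrt K) := by ring
      _ = C₂ * Real.sqrt E * (Real.sqrt 2 + 1) * K ^ ((1 : ℝ) / 2) := by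
          rw [Real.div_sqrt, hrpow_half]; ring
  refine ⟨hgoal1, ?_⟩
  -- second conclusion
  set Mf := ⨆ j : {j : ℤ // j ≠ 0 ∧ |j| ≤ J}, ‖f (j : ℤ)‖ / Real.sqrt |((j : ℤ) : ℝ)| with hMf
  have hfinS : {j : ℤ | j ≠ 0 ∧ |j| ≤ J}.Finite :=
    (Set.finite_Icc (-J) J).subset (fun x hx => Set.mem_Icc.mpr (abs_le.mp hx.2))
  haveI : Finite {j : ℤ // j ≠ 0 ∧ |j| ≤ J} := hfinS.to_subtype
  have hbddM : BddAbove (Set.range fun j : {j : ℤ // j ≠ 0 ∧ |j| ≤ J} =>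
      ‖f (j:ℤ)‖ / Real.sqrt |((j:ℤ):ℝ)|) := Set.Finite.bddAbove (Set.finite_range _)
  have hMle : ∀ (j : ℤ) (hj : j ≠ 0 ∧ |j| ≤ J), ‖f j‖ / Real.sqrt |(j:ℝ)| ≤ Mf :=
    fun j hj => le_ciSup hbddM ⟨j, hj⟩
  have hone : (1:ℤ) ≠ 0 ∧ |(1:ℤ)| ≤ J := ⟨one_ne_zero, by simpa using hJ⟩
  have hM0 : 0 ≤ Mf := le_trans (by positivity) (hMle 1 hone)
  have hfk : ‖f k‖ ≤ Mf * Real.sqrt K := by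
    by_cases hkJ : J < |k|
    · rw [hfJ k hkJ, norm_zero]; positivity
    · push_neg at hkJ
      have h := hMle k ⟨hk, hkJ⟩
      rw [div_le_iff₀ hsqKpos] at h
      linarith
  have hk2 : 0 < (k:ℝ)^2 := by
    have h1 : 0 < K*K := mul_pos hKpos hKpos
    have h2 : |(k:ℝ)|^2 = (k:ℝ)^2 := sq_abs _
    nlinarith [hKdef]
  have hknorm : ‖((ν * (k:ℝ)^2 : ℝ):ℂ)‖ = ν * K^2 := by
    rw [Complex.norm_real, Real.norm_eq_abs, abs_of_pos (mul_pos hν hk2), hKdef, sq_abs]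
  have hnum : ‖-Complex.I * ((k : ℂ) / 2) * (∑' k₁ : ℤ, a k₁ * a (k - k₁)) + f k‖
      ≤ (C₂ * Real.sqrt E * (Real.sqrt 2 + 1) + Mf) * Real.sqrt K := by
    calc ‖-Complex.I * ((k : ℂ) / 2) * (∑' k₁ : ℤ, a k₁ * a (k - k₁)) + f k‖
        ≤ ‖-Complex.I * ((k : ℂ) / 2) * (∑' k₁ : ℤ, a k₁ * a (k - k₁))‖ + ‖f k‖ :=
          norm_add_le _ _
      _ ≤ C₂ * Real.sqrt E * (Real.sqrt 2 + 1) * K ^ ((1:ℝ)/2) + Mf * Real.sqrt K :=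
          add_le_add hgoal1 hfk
      _ = (C₂ * Real.sqrt E * (Real.sqrt 2 + 1) + Mf) * Real.sqrt K := by
          rw [hrpow_half]; ring
  rw [norm_div, hknorm]
  have hrp32pos : 0 < K ^ ((3:ℝ)/2) := Real.rpow_pos_of_pos hKpos _
  rw [div_le_div_iff₀ (by positivity) hrp32pos]
  have h32 : Real.sqrt K * K^((3:ℝ)/2) = K^2 := by
    rw [Real.sqrt_eq_rpow, ← Real.rpow_add hKpos]
    norm_num
  calc ‖-Complex.I * ((k : ℂ) / 2) * (∑' k₁ : ℤ, a k₁ * a (k - k₁)) + f k‖ * K ^ ((3:ℝ)/2)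
      ≤ ((C₂ * Real.sqrt E * (Real.sqrt 2 + 1) + Mf) * Real.sqrt K) * K ^ ((3:ℝ)/2) :=
        mul_le_mul_of_nonneg_right hnum (le_of_lt hrp32pos)
    _ = (C₂ * Real.sqrt E * (Real.sqrt 2 + 1) + Mf) * K^2 := by
        rw [mul_assoc, h32]
    _ = (C₂ * Real.sqrt E * (Real.sqrt 2 + 1) + Mf) / ν * (ν * K^2) := by
        field_simp
end
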